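/- Let u ∈ ℝ^n and p ∈ (0,1). Then the p-superquantile of u equals the optimal value of the linear maximization over the superquantile ambiguity set: Q̄_p(u) = max_{q ∈ C_p} Σ_{i=1}^n q_i u_i, and the maximum is attained. -/

import Mathlib

open Finset MeasureTheory

/-- Empirical `p`-quantile of `u ∈ ℝⁿ`:
`Q_p(u) = inf {t : #{i : u i ≤ t} ≥ p·n}`. -/
noncomputable def empQuantile {n : ℕ} (p : ℝ) (u : Fin n → ℝ) : ℝ :=
  sInf {t : ℝ | p * n ≤ ((Finset.univ.filter fun i => u i ≤ t).card : ℝ)}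

/-- Empirical `p`-superquantile of `u ∈ ℝⁿ`:
`Q̄_p(u) = (1/(1-p)) ∫_p^1 Q_s(u) ds`. -/
noncomputable def supQuantile {n : ℕ} (p : ℝ) (u : Fin n → ℝ) : ℝ :=
  (1 - p)⁻¹ * ∫ s in p..1, empQuantile s u

/-- The superquantile ambiguity set
`C_p = {q : q_i ≥ 0, Σ_i q_i = 1, q_i ≤ 1/(n(1-p))}`. -/
def Cp (n : ℕ) (p : ℝ) : Set (Fin n → ℝ) :=
  {q | (∀ i, 0 ≤ q i) ∧ (∑ i, q i) = 1 ∧ ∀ i, q i ≤ 1 / ((n : ℝ) * (1 - p))}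

/-- permutation invariance of the count -/
lemma myCardPerm {n : ℕ} (u : Fin n → ℝ) (σ : Equiv.Perm (Fin n)) (t : ℝ) :
    (Finset.univ.filter fun i => u i ≤ t).card
      = (Finset.univ.filter fun k => u (σ k) ≤ t).card := by
  conv_rhs => rw [← Finset.card_map σ.toEmbedding]
  congr 1
  ext i
  simp only [Finset.mem_map, Finset.mem_filter, Finset.mem_univ, true_and,
    Equiv.coe_toEmbedding]
  constructor
  · intro h
    exact ⟨σ.symm i, by simpa using h, by simp⟩
  · rintro ⟨a, ha, rfl⟩
    exact ha

/-- count for a monotone vector -/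
lemma myCountMono {n : ℕ} {v : Fin n → ℝ} (hv : Monotone v) (k : Fin n) (t : ℝ) :
    ((k : ℕ) + 1 ≤ (Finset.univ.filter fun i => v i ≤ t).card) ↔ v k ≤ t := by
  constructor
  · intro h
    by_contra ht
    push_neg at ht
    have hsub : (Finset.univ.filter fun i => v i ≤ t) ⊆ Finset.Iio k := by
      intro i hi
      simp only [Finset.mem_filter, Finset.mem_univ, true_and] at hi
      simp only [Finset.mem_Iio]
      by_contra hik
      push_neg at hik
      exact absurd (le_trans (hv hik) hi) (not_le.2 ht)
    have h2 := Finset.card_le_card hsub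
    rw [Fin.card_Iio] at h2
    omega
  · intro h
    have hsub : Finset.Iic k ⊆ Finset.univ.filter fun i => v i ≤ t := by
      intro i hi
      simp only [Finset.mem_Iic] at hi
      simp only [Finset.mem_filter, Finset.mem_univ, true_and]
      exact le_trans (hv hi) h
    have h2 := Finset.card_le_card hsub
    rwa [Fin.card_Iic] at h2

lemma myQuantileEq {n : ℕ} (u : Fin n → ℝ) {k : ℕ} (hk : k < n) {s : ℝ}
    (h1 : (k : ℝ) < s * n) (h2 : s * n ≤ (k : ℝ) + 1) :
    empQuantile s u = u (Tuple.sort u ⟨k, hk⟩) := by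
  set σ := Tuple.sort u with hσ
  have hv : Monotone (fun i => u (σ i)) := Tuple.monotone_sort u
  have hset : {t : ℝ | s * (n : ℝ) ≤ ((Finset.univ.filter fun i => u i ≤ t).card : ℝ)}
      = Set.Ici (u (σ ⟨k, hk⟩)) := by
    ext t
    rw [Set.mem_setOf_eq, myCardPerm u σ t, Set.mem_Ici]
    rw [← myCountMono hv ⟨k, hk⟩ t]
    simp only [Fin.val_mk]
    constructor
    · intro h
      have hkc : (k : ℝ) < ((Finset.univ.filter fun i => u (σ i) ≤ t).card : ℝ) :=
        lt_of_lt_of_le h1 h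
      exact_mod_cast Nat.lt_iff_add_one_le.mp (by exact_mod_cast hkc)
    · intro h
      calc s * (n : ℝ) ≤ (k : ℝ) + 1 := h2
        _ ≤ _ := by exact_mod_cast h
  rw [empQuantile, hset, csInf_Ici]

lemma myPieceEq {n : ℕ} (hn : 1 ≤ n) (u : Fin n → ℝ) (p : ℝ) (hp0 : 0 < p) {k : ℕ} (hk : k < n) :
    Set.EqOn (fun s => empQuantile s u) (fun _ => u (Tuple.sort u ⟨k, hk⟩))
      (Set.Ioc (max p ((k : ℝ)/n)) (max p (((k : ℝ)+1)/n))) := by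
  intro s hs
  have hn0 : (0:ℝ) < n := by exact_mod_cast Nat.lt_of_lt_of_le Nat.zero_lt_one hn
  obtain ⟨hs1, hs2⟩ := hs
  have hb : max p (((k : ℝ)+1)/n) = ((k : ℝ)+1)/n := by
    rcases le_total p (((k : ℝ)+1)/n) with h | h
    · exact max_eq_right h
    · exfalso
      have : max p (((k : ℝ)+1)/n) = p := max_eq_left h
      rw [this] at hs2
      exact absurd (lt_of_le_of_lt (le_max_left p _) (lt_of_lt_of_le hs1 hs2)) (lt_irrefl p)
  have h1 : (k : ℝ) < s * n := by
    have : (k : ℝ)/n < s := lt_of_le_of_lt (le_max_right p _) hs1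
    exact (div_lt_iff₀ hn0).mp this
  have h2 : s * n ≤ (k : ℝ) + 1 := by
    have : s ≤ ((k : ℝ)+1)/n := hb ▸ hs2
    exact (le_div_iff₀ hn0).mp this
  exact myQuantileEq u hk h1 h2

lemma myPiece {n : ℕ} (hn : 1 ≤ n) (u : Fin n → ℝ) (p : ℝ) (hp0 : 0 < p) {k : ℕ} (hk : k < n) :
    (∫ s in (max p ((k : ℝ)/n))..(max p (((k : ℝ)+1)/n)), empQuantile s u)
      = (max p (((k : ℝ)+1)/n) - max p ((k : ℝ)/n)) * u (Tuple.sort u ⟨k, hk⟩) := by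
  have hn0 : (0:ℝ) < n := by exact_mod_cast Nat.lt_of_lt_of_le Nat.zero_lt_one hn
  have hab : max p ((k : ℝ)/n) ≤ max p (((k : ℝ)+1)/n) :=
    max_le_max le_rfl (by apply div_le_div_of_nonneg_right <;> linarith)
  rw [intervalIntegral.integral_of_le hab,
    setIntegral_congr_fun measurableSet_Ioc (myPieceEq hn u p hp0 hk),
    setIntegral_const, Real.volume_real_Ioc_of_le hab, smul_eq_mul]

lemma myPieceInt {n : ℕ} (hn : 1 ≤ n) (u : Fin n → ℝ) (p : ℝ) (hp0 : 0 < p) {k : ℕ} (hk : k < n) :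
    IntervalIntegrable (fun s => empQuantile s u) volume
      (max p ((k : ℝ)/n)) (max p (((k : ℝ)+1)/n)) := by
  have hn0 : (0:ℝ) < n := by exact_mod_cast Nat.lt_of_lt_of_le Nat.zero_lt_one hn
  have hab : max p ((k : ℝ)/n) ≤ max p (((k : ℝ)+1)/n) :=
    max_le_max le_rfl (by apply div_le_div_of_nonneg_right <;> linarith)
  rw [intervalIntegrable_iff_integrableOn_Ioc_of_le hab]
  exact (integrableOn_const measure_Ioc_lt_top.ne).congr_fun
    (myPieceEq hn u p hp0 hk).symm measurableSet_Ioc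

lemma myIntegral {n : ℕ} (hn : 1 ≤ n) (u : Fin n → ℝ) (p : ℝ) (hp0 : 0 < p) (hp1 : p < 1) :
    ∫ s in p..1, empQuantile s u
      = ∑ k ∈ Finset.range n,
          (max p (((k : ℝ)+1)/n) - max p ((k : ℝ)/n)) * u (Tuple.sort u ⟨min k (n-1), by omega⟩) := by
  have hn0 : (0:ℝ) < n := by exact_mod_cast Nat.lt_of_lt_of_le Nat.zero_lt_one hn
  set a : ℕ → ℝ := fun k => max p ((k : ℝ)/n) with ha
  have hint : ∀ k < n, IntervalIntegrable (fun s => empQuantile s u) volume (a k) (a (k+1)) := by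
    intro k hk
    have := myPieceInt hn u p hp0 hk
    simpa [ha, Nat.cast_add, Nat.cast_one] using this
  have hsum := intervalIntegral.sum_integral_adjacent_intervals hint
  have ha0 : a 0 = p := by simp [ha, max_eq_left hp0.le]
  have han : a n = 1 := by
    simp [ha, div_self (ne_of_gt hn0), max_eq_right hp1.le]
  rw [ha0, han] at hsum
  rw [← hsum]
  apply Finset.sum_congr rfl
  intro k hk
  rw [Finset.mem_range] at hk
  have h1 : a (k+1) = max p (((k : ℝ)+1)/n) := by push_cast [ha]; ring_nf
  have h2 : (⟨min k (n-1), by omega⟩ : Fin n) = ⟨k, hk⟩ := Fin.mk_eq_mk.mpr (by omega)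
  rw [h1, h2]
  have := myPiece hn u p hp0 hk
  simpa [ha] using this

lemma myAbel (n : ℕ) (V d : ℕ → ℝ) (hV : Monotone V)
    (hsum : ∑ k ∈ Finset.range n, d k = 0)
    (htail : ∀ j, 0 ≤ ∑ k ∈ Finset.Ico j n, d k) :
    0 ≤ ∑ k ∈ Finset.range n, d k * V k := by
  have h1 : ∑ k ∈ Finset.range n, d k * V k
      = ∑ k ∈ Finset.range n, d k * (V k - V 0) := by
    rw [Finset.sum_congr rfl (fun k _ => mul_sub (d k) (V k) (V 0)),
      Finset.sum_sub_distrib, ← Finset.sum_mul, hsum, zero_mul, sub_zero]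
  rw [h1]
  have h2 : ∀ k, d k * (V k - V 0) = ∑ j ∈ Finset.range k, d k * (V (j+1) - V j) := by
    intro k
    rw [← Finset.mul_sum, Finset.sum_range_sub]
  rw [Finset.sum_congr rfl (fun k _ => h2 k)]
  rw [Finset.sum_comm' (t' := Finset.range n) (s' := fun j => Finset.Ico (j+1) n)
    (by intro x y; simp only [Finset.mem_range, Finset.mem_Ico]; omega)]
  apply Finset.sum_nonneg
  intro j _
  rw [← Finset.sum_mul]
  exact mul_nonneg (htail (j+1)) (sub_nonneg.2 (hV (Nat.le_succ j)))

/-- Dual (distributionally robust) formulation: the superquantile is the maximal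
value (attained) of `q ↦ Σ_i q_i u_i` over the ambiguity set `C_p`. -/
theorem stmt3 {n : ℕ} (hn : 1 ≤ n) (u : Fin n → ℝ) (p : ℝ) (hp0 : 0 < p) (hp1 : p < 1) :
    IsGreatest ((fun q : Fin n → ℝ => ∑ i, q i * u i) '' Cp n p) (supQuantile p u) := by
  have hn0 : (0:ℝ) < n := by exact_mod_cast Nat.lt_of_lt_of_le Nat.zero_lt_one hn
  have h1p : (0:ℝ) < 1 - p := by linarith
  set σ := Tuple.sort u with hσ
  have hvmono : Monotone (fun i => u (σ i)) := Tuple.monotone_sort u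
  set V : ℕ → ℝ := fun k => u (σ ⟨min k (n-1), by omega⟩) with hV
  have hVmono : Monotone V := by
    intro k l hkl
    refine hvmono ?_
    simp only [Fin.mk_le_mk]
    omega
  set W : ℕ → ℝ := fun k => (1-p)⁻¹ * (max p (((k:ℝ)+1)/n) - max p ((k:ℝ)/n)) with hW
  have hWnn : ∀ k, 0 ≤ W k := by
    intro k
    apply mul_nonneg (inv_nonneg.2 h1p.le)
    apply sub_nonneg.2
    apply max_le_max le_rfl
    exact div_le_div_of_nonneg_right (by linarith) hn0.le
  have hWle : ∀ k, W k ≤ 1 / ((n:ℝ) * (1-p)) := by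
    intro k
    have hpos : (0:ℝ) < 1/(n:ℝ) := by positivity
    have hstep : max p (((k:ℝ)+1)/n) ≤ max p ((k:ℝ)/n) + 1/n := by
      apply max_le
      · linarith [le_max_left p ((k:ℝ)/n)]
      · have he : ((k:ℝ)+1)/n = (k:ℝ)/n + 1/n := by ring
        rw [he]
        linarith [le_max_right p ((k:ℝ)/n)]
    calc W k ≤ (1-p)⁻¹ * (1/n) := by
          apply mul_le_mul_of_nonneg_left (by linarith) (inv_nonneg.2 h1p.le)
      _ = 1 / ((n:ℝ) * (1-p)) := by
          rw [eq_comm, one_div, mul_inv, one_div]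
          ring
  have hWtail : ∀ j ≤ n, ∑ k ∈ Finset.Ico j n, W k = (1-p)⁻¹ * (1 - max p ((j:ℝ)/n)) := by
    intro j hj
    set g : ℕ → ℝ := fun k => (1-p)⁻¹ * max p ((k:ℝ)/n) with hg
    have hWg : ∀ k, W k = g (k+1) - g k := by
      intro k; rw [hW, hg]; push_cast; ring
    rw [Finset.sum_congr rfl (fun k _ => hWg k), Finset.sum_Ico_eq_sub _ hj,
      Finset.sum_range_sub, Finset.sum_range_sub]
    have hgn : g n = (1-p)⁻¹ * 1 := by
      rw [hg]; simp [div_self (ne_of_gt hn0), max_eq_right hp1.le]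
    rw [hgn, hg]
    ring
  have hWsum : ∑ k ∈ Finset.range n, W k = 1 := by
    have h := hWtail 0 (Nat.zero_le n)
    rw [Finset.range_eq_Ico]
    rw [h]
    simp only [Nat.cast_zero, zero_div, max_eq_left hp0.le]
    field_simp
  -- supQuantile as a finite sum
  have hsupQ : supQuantile p u = ∑ k ∈ Finset.range n, W k * V k := by
    rw [supQuantile, myIntegral hn u p hp0 hp1, Finset.mul_sum]
    apply Finset.sum_congr rfl
    intro k hk
    rw [hW, hV]
    ring
  -- conversion helpers
  have hconvQ : ∀ q : Fin n → ℝ,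
      ∑ k ∈ Finset.range n, (if h : k < n then q (σ ⟨k, h⟩) else 0) = ∑ i, q i := by
    intro q
    rw [← Fin.sum_univ_eq_sum_range (fun k => if h : k < n then q (σ ⟨k, h⟩) else 0) n]
    rw [← Equiv.sum_comp σ q]
    apply Finset.sum_congr rfl
    intro k _
    rw [dif_pos k.isLt]
  have hkey : ∀ q : Fin n → ℝ,
      ∑ i, q i * u i
        = ∑ k ∈ Finset.range n, (if h : k < n then q (σ ⟨k, h⟩) else 0) * V k := by
    intro q
    rw [← Fin.sum_univ_eq_sum_range (fun k => (if h : k < n then q (σ ⟨k, h⟩) else 0) * V k) n]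
    rw [← Equiv.sum_comp σ (fun i => q i * u i)]
    apply Finset.sum_congr rfl
    intro k _
    rw [dif_pos k.isLt]
    have h2 : (⟨min (k:ℕ) (n-1), by omega⟩ : Fin n) = k := by
      apply Fin.ext
      simp only [Fin.val_mk]
      omega
    rw [hV]
    simp only [h2]
  constructor
  · -- membership
    refine ⟨fun i => W ((σ.symm i : Fin n) : ℕ), ⟨fun i => hWnn _, ?_, fun i => hWle _⟩, ?_⟩
    · rw [← Equiv.sum_comp σ (fun i => W ((σ.symm i : Fin n) : ℕ))]
      simp only [Equiv.symm_apply_apply]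
      rw [Fin.sum_univ_eq_sum_range (fun k => W k) n]
      exact hWsum
    · show ∑ i, W ((σ.symm i : Fin n) : ℕ) * u i = supQuantile p u
      rw [hkey fun i => W ((σ.symm i : Fin n) : ℕ), hsupQ]
      apply Finset.sum_congr rfl
      intro k hk
      rw [Finset.mem_range] at hk
      rw [dif_pos hk]
      simp only [Equiv.symm_apply_apply]
  · -- upper bound
    rintro x ⟨q, ⟨hq0, hq1, hq2⟩, rfl⟩
    simp only
    set Q : ℕ → ℝ := fun k => if h : k < n then q (σ ⟨k, h⟩) else 0 with hQ
    have hQnn : ∀ k, 0 ≤ Q k := by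
      intro k
      simp only [hQ]
      split
      · exact hq0 _
      · exact le_rfl
    have hQle : ∀ k, Q k ≤ 1 / ((n:ℝ) * (1-p)) := by
      intro k
      simp only [hQ]
      split
      · exact hq2 _
      · exact le_of_lt (div_pos one_pos (mul_pos hn0 h1p))
    have hQsum : ∑ k ∈ Finset.range n, Q k = 1 := by rw [hQ, hconvQ q, hq1]
    have htail : ∀ j, 0 ≤ ∑ k ∈ Finset.Ico j n, (W k - Q k) := by
      intro j
      rcases le_or_gt n j with hj | hj
      · rw [Finset.Ico_eq_empty (by omega)]
        simp
      · rw [Finset.sum_sub_distrib, sub_nonneg, hWtail j hj.le]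
        rcases le_total ((j:ℝ)/n) p with hc | hc
        · rw [max_eq_left hc]
          have h1 : (1-p)⁻¹ * (1 - p) = 1 := by field_simp
          rw [h1]
          rw [← hQsum, Finset.range_eq_Ico]
          apply Finset.sum_le_sum_of_subset_of_nonneg
          · exact Finset.Ico_subset_Ico (Nat.zero_le j) le_rfl
          · intro k _ _; exact hQnn k
        · rw [max_eq_right hc]
          calc ∑ k ∈ Finset.Ico j n, Q k
              ≤ (Finset.Ico j n).card • (1 / ((n:ℝ) * (1-p))) :=
                Finset.sum_le_card_nsmul _ _ _ (fun k _ => hQle k)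
            _ = ((n - j : ℕ) : ℝ) * (1 / ((n:ℝ) * (1-p))) := by
                rw [Nat.card_Ico, nsmul_eq_mul]
            _ = (1-p)⁻¹ * (1 - (j:ℝ)/n) := by
                rw [Nat.cast_sub hj.le, eq_comm]
                field_simp
    have habel := myAbel n V (fun k => W k - Q k) hVmono
      (by rw [Finset.sum_sub_distrib, hWsum, hQsum, sub_self]) htail
    rw [hkey q, hsupQ]
    have hexp : ∑ k ∈ Finset.range n, (W k - Q k) * V k
        = ∑ k ∈ Finset.range n, W k * V k - ∑ k ∈ Finset.range n, Q k * V k := by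
      rw [← Finset.sum_sub_distrib]
      apply Finset.sum_congr rfl
      intro k _
      ring
    rw [hexp] at habel
    linarith
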